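/- Suppose Y = f(X) almost surely where f : 𝕏 → 𝕐 is 1-Lipschitz on the support of L(X). Then with the ℓ¹ product metric d((x,y),(x',y')) = d_𝕏(x,x') + d_𝕐(y,y'), equality holds: W_{d,p}(L(X,Y), L(X) ⊗ L(Y))^p = E[d_𝕐(Y,Y')^p], where Y' is an independent copy of Y. -/

import Mathlib

open MeasureTheory ProbabilityTheory

/-- The Wasserstein distance of order `p` with ground cost `d`, defined as the infimum
over couplings of `P` and `Q` of the `p`-th root of the expected `p`-th power cost. -/
noncomputable def Wass {α : Type*} [MeasurableSpace α]
    (d : α → α → ℝ) (p : ℝ) (P Q : Measure α) : ℝ :=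
  sInf ((fun γ : Measure (α × α) => (∫ z, d z.1 z.2 ^ p ∂γ) ^ (1 / p)) ''
    {γ | γ.map Prod.fst = P ∧ γ.map Prod.snd = Q})

/-- The (topological) support of a measure: points all of whose neighborhoods
have positive measure. -/
def msupport {α : Type*} [TopologicalSpace α] [MeasurableSpace α] (ν : Measure α) : Set α :=
  {x | ∀ U ∈ nhds x, ν U ≠ 0}

lemma msupport_isClosed {α : Type*} [TopologicalSpace α] [MeasurableSpace α] (ν : Measure α) :
    IsClosed (msupport ν) := by
  rw [← isOpen_compl_iff, isOpen_iff_mem_nhds]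
  intro x hx
  simp only [Set.mem_compl_iff, msupport, Set.mem_setOf_eq, not_forall] at hx
  obtain ⟨U, hU, hU0⟩ := hx
  rw [not_ne_iff] at hU0
  filter_upwards [interior_mem_nhds.2 hU] with y hy
  simp only [Set.mem_compl_iff, msupport, Set.mem_setOf_eq, not_forall]
  exact ⟨interior U, isOpen_interior.mem_nhds hy,
    by rw [not_ne_iff]; exact measure_mono_null interior_subset hU0⟩

lemma msupport_compl_null {α : Type*} [TopologicalSpace α] [SecondCountableTopology α]
    [MeasurableSpace α] (ν : Measure α) : ν (msupport ν)ᶜ = 0 := by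
  set 𝒰 : Set (Set α) := {U | IsOpen U ∧ ν U = 0} with h𝒰
  obtain ⟨T, hTc, hT𝒰, hTU⟩ := TopologicalSpace.isOpen_sUnion_countable 𝒰 (fun s hs => hs.1)
  have hsub : (msupport ν)ᶜ ⊆ ⋃₀ 𝒰 := by
    intro x hx
    simp only [Set.mem_compl_iff, msupport, Set.mem_setOf_eq, not_forall] at hx
    obtain ⟨U, hU, hU0⟩ := hx
    rw [not_ne_iff] at hU0
    exact ⟨interior U, ⟨isOpen_interior, measure_mono_null interior_subset hU0⟩,
      mem_interior_iff_mem_nhds.2 hU⟩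
  have : ν (⋃₀ T) = 0 := by
    rw [Set.sUnion_eq_biUnion]
    exact (measure_biUnion_null_iff hTc).2 fun s hs => (hT𝒰 hs).2
  exact measure_mono_null (hTU ▸ hsub) this

lemma sum_rpow_le {p : ℝ} (hp : 0 ≤ p) {a b c d : ℝ} (ha : 0 ≤ a) (hb : 0 ≤ b)
    (hc : 0 ≤ c) (hd : 0 ≤ d) :
    (a + b + c + d) ^ p ≤ 4 ^ p * ((a ^ p + b ^ p) + (c ^ p + d ^ p)) := by
  have hm : 0 ≤ max (max a b) (max c d) := ha.trans ((le_max_left a b).trans (le_max_left _ _))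
  have h4 : a + b + c + d ≤ 4 * max (max a b) (max c d) := by
    have h1 : a ≤ max (max a b) (max c d) := (le_max_left a b).trans (le_max_left _ _)
    have h2 : b ≤ max (max a b) (max c d) := (le_max_right a b).trans (le_max_left _ _)
    have h3 : c ≤ max (max a b) (max c d) := (le_max_left c d).trans (le_max_right _ _)
    have h5 : d ≤ max (max a b) (max c d) := (le_max_right c d).trans (le_max_right _ _)
    linarith
  calc (a + b + c + d) ^ p ≤ (4 * max (max a b) (max c d)) ^ p :=
        Real.rpow_le_rpow (by linarith) h4 hp
    _ = 4 ^ p * max (max a b) (max c d) ^ p := Real.mul_rpow (by norm_num) hm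
    _ ≤ 4 ^ p * ((a ^ p + b ^ p) + (c ^ p + d ^ p)) := by
        refine mul_le_mul_of_nonneg_left ?_ (Real.rpow_nonneg (by norm_num) p)
        have pa := Real.rpow_nonneg ha p
        have pb := Real.rpow_nonneg hb p
        have pc := Real.rpow_nonneg hc p
        have pd := Real.rpow_nonneg hd p
        rcases max_choice (max a b) (max c d) with h | h <;> rw [h]
        · rcases max_choice a b with h' | h' <;> rw [h'] <;> linarith
        · rcases max_choice c d with h' | h' <;> rw [h'] <;> linarith

theorem stmt3 {Ω 𝕏 𝕐 : Type*} [MeasurableSpace Ω]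
    [MetricSpace 𝕏] [PolishSpace 𝕏] [MeasurableSpace 𝕏] [BorelSpace 𝕏]
    [MetricSpace 𝕐] [PolishSpace 𝕐] [MeasurableSpace 𝕐] [BorelSpace 𝕐]
    (μ : Measure Ω) [IsProbabilityMeasure μ]
    (X : Ω → 𝕏) (Y : Ω → 𝕐) (hX : Measurable X) (hY : Measurable Y)
    (p : ℝ) (hp : 1 ≤ p) (x₀ : 𝕏) (y₀ : 𝕐)
    (hmX : Integrable (fun ω => dist (X ω) x₀ ^ p) μ)
    (hmY : Integrable (fun ω => dist (Y ω) y₀ ^ p) μ)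
    (Y' : Ω → 𝕐) (hY' : Measurable Y')
    (hindep : IndepFun (fun ω => (X ω, Y ω)) Y' μ)
    (hcopy : μ.map Y' = μ.map Y)
    (f : 𝕏 → 𝕐) (hf : LipschitzOnWith 1 f (msupport (μ.map X)))
    (hfX : ∀ᵐ ω ∂μ, Y ω = f (X ω)) :
    Wass (fun z z' => dist z.1 z'.1 + dist z.2 z'.2) p
        (μ.map (fun ω => (X ω, Y ω))) ((μ.map X).prod (μ.map Y)) ^ p
      = ∫ ω, dist (Y ω) (Y' ω) ^ p ∂μ := by
  classical
  have hp0 : (0:ℝ) ≤ p := by linarith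
  have hp_ne : p ≠ 0 := by positivity
  have hip0 : (0:ℝ) ≤ 1 / p := by positivity
  set S : Set 𝕏 := msupport (μ.map X) with hSdef
  set g : 𝕏 → 𝕐 := S.piecewise f (fun _ => y₀) with hgdef
  have hS_meas : MeasurableSet S := (msupport_isClosed _).measurableSet
  have hg_meas : Measurable g :=
    ContinuousOn.measurable_piecewise hf.continuousOn continuousOn_const hS_meas
  have hgS : ∀ x ∈ S, g x = f x := fun x hx => Set.piecewise_eq_of_mem _ _ _ hx
  have hg_lip : ∀ x ∈ S, ∀ x' ∈ S, dist (g x) (g x') ≤ dist x x' := by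
    intro x hx x' hx'
    rw [hgS x hx, hgS x' hx']
    simpa using hf.dist_le_mul x hx x' hx'
  have hXS : ∀ᵐ ω ∂μ, X ω ∈ S := by
    have h0 : μ.map X Sᶜ = 0 := msupport_compl_null _
    rw [Measure.map_apply hX hS_meas.compl] at h0
    exact ae_iff.2 h0
  have hYgX : ∀ᵐ ω ∂μ, Y ω = g (X ω) := by
    filter_upwards [hfX, hXS] with ω h1 h2
    rw [h1, hgS _ h2]
  haveI : IsProbabilityMeasure (μ.map X) := Measure.isProbabilityMeasure_map hX.aemeasurable
  haveI : IsProbabilityMeasure (μ.map Y) := Measure.isProbabilityMeasure_map hY.aemeasurable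
  haveI : IsProbabilityMeasure (μ.map Y') := Measure.isProbabilityMeasure_map hY'.aemeasurable
  have hXY : Measurable fun ω => (X ω, Y ω) := hX.prodMk hY
  haveI : IsProbabilityMeasure (μ.map fun ω => (X ω, Y ω)) :=
    Measure.isProbabilityMeasure_map hXY.aemeasurable
  set P : Measure (𝕏 × 𝕐) := μ.map (fun ω => (X ω, Y ω)) with hPdef
  set Q : Measure (𝕏 × 𝕐) := (μ.map X).prod (μ.map Y) with hQdef
  -- independence consequences
  have hiXY' : IndepFun X Y' μ := hindep.comp measurable_fst measurable_id
  have hiYY' : IndepFun Y Y' μ := hindep.comp measurable_snd measurable_id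
  have hXY'map : μ.map (fun ω => (X ω, Y' ω)) = (μ.map X).prod (μ.map Y') :=
    (indepFun_iff_map_prod_eq_prod_map_map hX.aemeasurable hY'.aemeasurable).mp hiXY'
  have hYY'map : μ.map (fun ω => (Y ω, Y' ω)) = (μ.map Y).prod (μ.map Y) := by
    rw [(indepFun_iff_map_prod_eq_prod_map_map hY.aemeasurable hY'.aemeasurable).mp hiYY', hcopy]
  -- the cost function
  set c : (𝕏 × 𝕐) × (𝕏 × 𝕐) → ℝ := fun z => (dist z.1.1 z.2.1 + dist z.1.2 z.2.2) ^ p with hcdef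
  have hc_cont : Continuous c := by
    apply Continuous.rpow_const ?_ (fun _ => Or.inr hp0)
    exact ((continuous_fst.comp continuous_fst).dist (continuous_fst.comp continuous_snd)).add
      ((continuous_snd.comp continuous_fst).dist (continuous_snd.comp continuous_snd))
  have hc_nonneg : ∀ z, 0 ≤ c z := fun z =>
    Real.rpow_nonneg (add_nonneg dist_nonneg dist_nonneg) _
  set I : ℝ := ∫ ω, dist (Y ω) (Y' ω) ^ p ∂μ with hIdef
  have hI_nonneg : 0 ≤ I :=
    integral_nonneg fun ω => Real.rpow_nonneg dist_nonneg _
  have hdYY_cont : Continuous fun w : 𝕐 × 𝕐 => dist w.1 w.2 ^ p :=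
    (continuous_fst.dist continuous_snd).rpow_const (fun _ => Or.inr hp0)
  set J : ℝ := ∫ w : 𝕐 × 𝕐, dist w.1 w.2 ^ p ∂((μ.map Y).prod (μ.map Y)) with hJdef
  have hIJ : J = I := by
    rw [hJdef, ← hYY'map,
      integral_map (hY.prodMk hY').aemeasurable hdYY_cont.aestronglyMeasurable]
  have hQmap : Q.map (Prod.map g id) = (μ.map Y).prod (μ.map Y) := by
    rw [hQdef, ← Measure.map_prod_map _ _ hg_meas measurable_id, Measure.map_id]
    congr 1
    rw [Measure.map_map hg_meas hX]
    exact (Measure.map_congr hYgX).symm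
  have hQg : ∫ z : 𝕏 × 𝕐, dist (g z.1) z.2 ^ p ∂Q = J := by
    have h := integral_map (μ := Q) (hg_meas.prodMap measurable_id).aemeasurable
      hdYY_cont.aestronglyMeasurable
    rw [hQmap] at h
    rw [hJdef, h]
    rfl
  -- upper bound: explicit coupling
  have hF : Measurable fun ω => ((X ω, Y ω), (X ω, Y' ω)) :=
    hXY.prodMk (hX.prodMk hY')
  set γ₀ : Measure ((𝕏 × 𝕐) × (𝕏 × 𝕐)) := μ.map (fun ω => ((X ω, Y ω), (X ω, Y' ω))) with hγ₀def
  have hγ₀1 : γ₀.map Prod.fst = P := by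
    rw [hγ₀def, Measure.map_map measurable_fst hF]; rfl
  have hγ₀2 : γ₀.map Prod.snd = Q := by
    rw [hγ₀def, Measure.map_map measurable_snd hF]
    show μ.map (fun ω => (X ω, Y' ω)) = Q
    rw [hXY'map, hcopy]
  have hγ₀val : ∫ z, c z ∂γ₀ = I := by
    rw [hγ₀def, integral_map hF.aemeasurable hc_cont.aestronglyMeasurable]
    simp only [hcdef, dist_self, zero_add]
    rfl
  -- generic nonnegativity of values
  have hval_nonneg : ∀ γ : Measure ((𝕏 × 𝕐) × (𝕏 × 𝕐)), (0:ℝ) ≤ (∫ z, c z ∂γ) ^ (1 / p) :=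
    fun γ => Real.rpow_nonneg (integral_nonneg hc_nonneg) _
  -- lower bound : every coupling has cost at least I
  have hlow : ∀ γ : Measure ((𝕏 × 𝕐) × (𝕏 × 𝕐)),
      γ.map Prod.fst = P → γ.map Prod.snd = Q → I ≤ ∫ z, c z ∂γ := by
    intro γ hγ1 hγ2
    haveI : IsProbabilityMeasure γ := by
      constructor
      have h1 : γ.map Prod.fst Set.univ = 1 := by rw [hγ1]; exact measure_univ
      rwa [Measure.map_apply measurable_fst MeasurableSet.univ, Set.preimage_univ] at h1
    -- a.e. facts
    have hA1 : ∀ᵐ z ∂γ, z.1.1 ∈ S := by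
      rw [ae_iff]
      have : {z : (𝕏 × 𝕐) × (𝕏 × 𝕐) | ¬ z.1.1 ∈ S}
          = Prod.fst ⁻¹' (Prod.fst ⁻¹' Sᶜ) := rfl
      rw [this, ← Measure.map_apply measurable_fst (measurable_fst hS_meas.compl), hγ1,
        hPdef, Measure.map_apply hXY (measurable_fst hS_meas.compl)]
      exact ae_iff.1 hXS
    have hG_meas : MeasurableSet {w : 𝕏 × 𝕐 | w.2 = g w.1} :=
      measurable_snd.stronglyMeasurable.measurableSet_eq_fun
        (hg_meas.comp measurable_fst).stronglyMeasurable
    have hA2 : ∀ᵐ z ∂γ, z.1.2 = g z.1.1 := by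
      rw [ae_iff]
      have : {z : (𝕏 × 𝕐) × (𝕏 × 𝕐) | ¬ z.1.2 = g z.1.1}
          = Prod.fst ⁻¹' {w : 𝕏 × 𝕐 | w.2 = g w.1}ᶜ := rfl
      rw [this, ← Measure.map_apply measurable_fst hG_meas.compl, hγ1,
        hPdef, Measure.map_apply hXY hG_meas.compl]
      exact ae_iff.1 hYgX
    have hA3 : ∀ᵐ z ∂γ, z.2.1 ∈ S := by
      rw [ae_iff]
      have : {z : (𝕏 × 𝕐) × (𝕏 × 𝕐) | ¬ z.2.1 ∈ S}
          = Prod.snd ⁻¹' (Prod.fst ⁻¹' Sᶜ) := rfl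
      rw [this, ← Measure.map_apply measurable_snd (measurable_fst hS_meas.compl), hγ2,
        hQdef]
      have : (Prod.fst ⁻¹' Sᶜ : Set (𝕏 × 𝕐)) = Sᶜ ×ˢ Set.univ := by
        rw [Set.prod_univ]
      rw [this, Measure.prod_prod, hSdef, msupport_compl_null, zero_mul]
    -- integrability of the cost
    have hcont1 : Continuous fun w : 𝕏 × 𝕐 => dist w.1 x₀ ^ p :=
      (continuous_fst.dist continuous_const).rpow_const (fun _ => Or.inr hp0)
    have hcont2 : Continuous fun w : 𝕏 × 𝕐 => dist w.2 y₀ ^ p :=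
      (continuous_snd.dist continuous_const).rpow_const (fun _ => Or.inr hp0)
    have hP1 : Integrable (fun w : 𝕏 × 𝕐 => dist w.1 x₀ ^ p) P := by
      rw [hPdef, integrable_map_measure hcont1.aestronglyMeasurable hXY.aemeasurable]
      exact hmX
    have hP2 : Integrable (fun w : 𝕏 × 𝕐 => dist w.2 y₀ ^ p) P := by
      rw [hPdef, integrable_map_measure hcont2.aestronglyMeasurable hXY.aemeasurable]
      exact hmY
    have hQfst : Q.map Prod.fst = μ.map X := by
      rw [hQdef, Measure.map_fst_prod]; simp
    have hQsnd : Q.map Prod.snd = μ.map Y := by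
      rw [hQdef, Measure.map_snd_prod]; simp
    have hcX : Continuous fun x : 𝕏 => dist x x₀ ^ p :=
      (continuous_id.dist continuous_const).rpow_const (fun _ => Or.inr hp0)
    have hcY : Continuous fun y : 𝕐 => dist y y₀ ^ p :=
      (continuous_id.dist continuous_const).rpow_const (fun _ => Or.inr hp0)
    have hQ1 : Integrable (fun w : 𝕏 × 𝕐 => dist w.1 x₀ ^ p) Q := by
      have hx : Integrable (fun x : 𝕏 => dist x x₀ ^ p) (μ.map X) := by
        rw [integrable_map_measure hcX.aestronglyMeasurable hX.aemeasurable]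
        exact hmX
      rw [← hQfst] at hx
      exact (integrable_map_measure hcX.aestronglyMeasurable
        measurable_fst.aemeasurable).mp hx
    have hQ2 : Integrable (fun w : 𝕏 × 𝕐 => dist w.2 y₀ ^ p) Q := by
      have hy : Integrable (fun y : 𝕐 => dist y y₀ ^ p) (μ.map Y) := by
        rw [integrable_map_measure hcY.aestronglyMeasurable hY.aemeasurable]
        exact hmY
      rw [← hQsnd] at hy
      exact (integrable_map_measure hcY.aestronglyMeasurable
        measurable_snd.aemeasurable).mp hy
    have hd1 : Integrable (fun z : (𝕏 × 𝕐) × (𝕏 × 𝕐) => dist z.1.1 x₀ ^ p) γ := by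
      rw [← hγ1] at hP1
      exact (integrable_map_measure hcont1.aestronglyMeasurable
        measurable_fst.aemeasurable).mp hP1
    have hd2 : Integrable (fun z : (𝕏 × 𝕐) × (𝕏 × 𝕐) => dist z.1.2 y₀ ^ p) γ := by
      rw [← hγ1] at hP2
      exact (integrable_map_measure hcont2.aestronglyMeasurable
        measurable_fst.aemeasurable).mp hP2
    have hd3 : Integrable (fun z : (𝕏 × 𝕐) × (𝕏 × 𝕐) => dist z.2.1 x₀ ^ p) γ := by
      rw [← hγ2] at hQ1
      exact (integrable_map_measure hcont1.aestronglyMeasurable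
        measurable_snd.aemeasurable).mp hQ1
    have hd4 : Integrable (fun z : (𝕏 × 𝕐) × (𝕏 × 𝕐) => dist z.2.2 y₀ ^ p) γ := by
      rw [← hγ2] at hQ2
      exact (integrable_map_measure hcont2.aestronglyMeasurable
        measurable_snd.aemeasurable).mp hQ2
    have hInt_c : Integrable c γ := by
      refine Integrable.mono' (((hd1.add hd2).add (hd3.add hd4)).const_mul (4 ^ p))
        hc_cont.aestronglyMeasurable (Filter.Eventually.of_forall fun z => ?_)
      rw [Real.norm_eq_abs, abs_of_nonneg (hc_nonneg z)]
      have t1 : dist z.1.1 z.2.1 ≤ dist z.1.1 x₀ + dist z.2.1 x₀ := by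
        rw [dist_comm z.2.1 x₀]; exact dist_triangle _ _ _
      have t2 : dist z.1.2 z.2.2 ≤ dist z.1.2 y₀ + dist z.2.2 y₀ := by
        rw [dist_comm z.2.2 y₀]; exact dist_triangle _ _ _
      calc c z ≤ (dist z.1.1 x₀ + dist z.1.2 y₀ + dist z.2.1 x₀ + dist z.2.2 y₀) ^ p := by
            apply Real.rpow_le_rpow (add_nonneg dist_nonneg dist_nonneg) ?_ hp0
            linarith
        _ ≤ 4 ^ p * ((dist z.1.1 x₀ ^ p + dist z.1.2 y₀ ^ p)
              + (dist z.2.1 x₀ ^ p + dist z.2.2 y₀ ^ p)) :=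
            sum_rpow_le hp0 dist_nonneg dist_nonneg dist_nonneg dist_nonneg
    -- the pointwise a.e. inequality
    have hptwise : ∀ᵐ z ∂γ, dist (g z.2.1) z.2.2 ^ p ≤ c z := by
      filter_upwards [hA1, hA2, hA3] with z h1 h2 h3
      apply Real.rpow_le_rpow dist_nonneg ?_ hp0
      have t1 : dist (g z.2.1) z.2.2 ≤ dist (g z.2.1) (g z.1.1) + dist (g z.1.1) z.2.2 :=
        dist_triangle _ _ _
      have t2 : dist (g z.2.1) (g z.1.1) ≤ dist z.2.1 z.1.1 := hg_lip _ h3 _ h1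
      have t3 : dist (g z.1.1) z.2.2 = dist z.1.2 z.2.2 := by rw [h2]
      rw [dist_comm z.2.1 z.1.1] at t2
      linarith
    have hh_meas : Measurable fun z : (𝕏 × 𝕐) × (𝕏 × 𝕐) => dist (g z.2.1) z.2.2 ^ p := by
      have h0 : Measurable fun z : (𝕏 × 𝕐) × (𝕏 × 𝕐) => dist (g z.2.1) z.2.2 :=
        (hg_meas.comp (measurable_fst.comp measurable_snd)).dist
          (measurable_snd.comp measurable_snd)
      exact ((continuous_id.rpow_const fun _ => Or.inr hp0).measurable).comp h0
    have hInt_h : Integrable (fun z : (𝕏 × 𝕐) × (𝕏 × 𝕐) => dist (g z.2.1) z.2.2 ^ p) γ := by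
      refine hInt_c.mono hh_meas.aestronglyMeasurable ?_
      filter_upwards [hptwise] with z hz
      rw [Real.norm_eq_abs, Real.norm_eq_abs, abs_of_nonneg (Real.rpow_nonneg dist_nonneg _),
        abs_of_nonneg (hc_nonneg z)]
      exact hz
    have hmono : ∫ z, dist (g z.2.1) z.2.2 ^ p ∂γ ≤ ∫ z, c z ∂γ :=
      integral_mono_ae hInt_h hInt_c hptwise
    have hh2_meas : Measurable fun w : 𝕏 × 𝕐 => dist (g w.1) w.2 ^ p := by
      have h0 : Measurable fun w : 𝕏 × 𝕐 => dist (g w.1) w.2 :=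
        (hg_meas.comp measurable_fst).dist measurable_snd
      exact ((continuous_id.rpow_const fun _ => Or.inr hp0).measurable).comp h0
    have heq : ∫ z, dist (g z.2.1) z.2.2 ^ p ∂γ = I := by
      have h := integral_map (μ := γ) measurable_snd.aemeasurable
        hh2_meas.aestronglyMeasurable
      rw [hγ2, hQg, hIJ] at h
      exact h.symm
    rw [← heq]
    exact hmono
  -- assembling
  have hWass : Wass (fun z z' : 𝕏 × 𝕐 => dist z.1 z'.1 + dist z.2 z'.2) p P Q = I ^ (1 / p) := by
    have hmem : (∫ z, c z ∂γ₀) ^ (1 / p) ∈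
        ((fun γ : Measure ((𝕏 × 𝕐) × (𝕏 × 𝕐)) =>
          (∫ z, (fun z z' : 𝕏 × 𝕐 => dist z.1 z'.1 + dist z.2 z'.2) z.1 z.2 ^ p ∂γ) ^ (1 / p)) ''
          {γ | γ.map Prod.fst = P ∧ γ.map Prod.snd = Q}) :=
      ⟨γ₀, ⟨hγ₀1, hγ₀2⟩, rfl⟩
    rw [Wass]
    apply le_antisymm
    · apply csInf_le ⟨0, ?_⟩ ?_
      · rintro v ⟨γ, -, rfl⟩
        exact hval_nonneg γ
      · rw [← hγ₀val]
        exact hmem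
    · apply le_csInf ⟨_, hmem⟩
      rintro v ⟨γ, ⟨h1, h2⟩, rfl⟩
      exact Real.rpow_le_rpow hI_nonneg (hlow γ h1 h2) hip0
  rw [hWass, ← Real.rpow_mul hI_nonneg, one_div, inv_mul_cancel₀ hp_ne, Real.rpow_one]
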